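/- The cutoff characterizes the best response: for every k ∈ [0,1), f ∈ [0,1], and real l, the payoff difference satisfies Δ(l,f) > 0 if and only if l > lk(f), and Δ(l,f) = 0 if and only if l = lk(f). -/

import Mathlib

/-- The cutoff log likelihood ratio at congestion cost `k` and fraction `f`. -/
noncomputable def cutoffLLR (k f : ℝ) : ℝ :=
  Real.log ((1 - k + 2*f*k) / (1 + k - 2*f*k))

/-- The expected payoff difference between actions `ρ` and `λ` for a player with
log likelihood ratio `l` when a fraction `f` of previous players chose `ρ`. -/
noncomputable def payoffDiff (k l f : ℝ) : ℝ :=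
  (Real.exp l - 1) / (1 + Real.exp l) + (1 - 2*f) * k

/-- the cutoff characterizes the best response:
`Δ(l,f) > 0 ↔ l > lk(f)` and `Δ(l,f) = 0 ↔ l = lk(f)`. -/
theorem payoffDiff_pos_iff_cutoff
    (k f l : ℝ) (hk0 : 0 ≤ k) (hk1 : k < 1) (hf0 : 0 ≤ f) (hf1 : f ≤ 1) :
    (0 < payoffDiff k l f ↔ cutoffLLR k f < l) ∧
      (payoffDiff k l f = 0 ↔ l = cutoffLLR k f) := by
  set a : ℝ := 1 - k + 2*f*k with ha
  set b : ℝ := 1 + k - 2*f*k with hb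
  have ha0 : 0 < a := by nlinarith
  have hb0 : 0 < b := by nlinarith
  have hd : 0 < 1 + Real.exp l := by positivity
  have hΔ : payoffDiff k l f = (b * Real.exp l - a) / (1 + Real.exp l) := by
    unfold payoffDiff
    rw [hb, ha]
    field_simp
    ring
  have hcut : cutoffLLR k f = Real.log (a / b) := rfl
  have hab : 0 < a / b := div_pos ha0 hb0
  constructor
  · rw [hΔ, hcut, Real.log_lt_iff_lt_exp hab, div_lt_iff₀ hb0,
      div_pos_iff_of_pos_right hd]
    constructor <;> intro h <;> nlinarith
  · rw [hΔ, hcut, div_eq_zero_iff]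
    constructor
    · rintro (h | h)
      · have : Real.exp l = a / b := by field_simp; linarith
        rw [← Real.log_exp l, this]
      · linarith
    · intro h
      left
      have : Real.exp l = a / b := by rw [h, Real.exp_log hab]
      rw [this]
      field_simp
      ring
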